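/- Consecutive strings in the quaternary reflected Gray code differ in exactly one digit, and that digit changes by exactly 1. Precisely, in the list QUAT(n) defined by QUAT(1) = [0,1,2,3] and QUAT(n) = 0·QUAT(n-1) ++ 1·reverse(QUAT(n-1)) ++ 2·QUAT(n-1) ++ 3·reverse(QUAT(n-1)), any two adjacent strings agree in all positions except one, where the digits differ by exactly 1. -/

import Mathlib

def quatRGC : ℕ → List (List ℕ)
  | 0 => []
  | 1 => [[0], [1], [2], [3]]
  | n + 2 =>
      (quatRGC (n + 1)).map (fun w => 0 :: w) ++
      (quatRGC (n + 1)).reverse.map (fun w => 1 :: w) ++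
      (quatRGC (n + 1)).map (fun w => 2 :: w) ++
      (quatRGC (n + 1)).reverse.map (fun w => 3 :: w)

private def R (u v : List ℕ) : Prop :=
  u.length = v.length ∧ ∃ i < u.length,
    (∀ j < u.length, j ≠ i → u.getD j 0 = v.getD j 0) ∧
    ((u.getD i 0 : ℤ) - (v.getD i 0 : ℤ)).natAbs = 1

private lemma R_cons {u v : List ℕ} (d : ℕ) (h : R u v) : R (d :: u) (d :: v) := by
  obtain ⟨hl, i, hi, hj, hd⟩ := h
  refine ⟨by simp [hl], i+1, by simpa using hi, ?_, by simpa using hd⟩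
  intro j hj' hne
  cases j with
  | zero => simp
  | succ k => simpa using hj k (by simpa using hj') (by omega)

private lemma R_head {w : List ℕ} {a b : ℕ} (h : ((a:ℤ) - b).natAbs = 1) : R (a :: w) (b :: w) := by
  refine ⟨rfl, 0, by simp, ?_, by simpa using h⟩
  intro j hj hne
  cases j with
  | zero => omega
  | succ k => simp

private lemma R_symm {u v : List ℕ} (h : R u v) : R v u := by
  obtain ⟨hl, i, hi, hj, hd⟩ := h
  exact ⟨hl.symm, i, hl ▸ hi, fun j hjlt hne => (hj j (hl ▸ hjlt) hne).symm, by omega⟩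

private lemma chain_map {L : List (List ℕ)} (d : ℕ) (h : L.Chain' R) :
    (L.map (fun w => d :: w)).Chain' R := by
  unfold List.Chain' at h ⊢
  rw [List.isChain_map]
  exact h.imp (fun a b => R_cons d)

private lemma chain_rev {L : List (List ℕ)} (h : L.Chain' R) : L.reverse.Chain' R := by
  unfold List.Chain' at h ⊢
  rw [List.isChain_reverse]
  exact h.imp (fun a b hab => R_symm hab)

private lemma quat_ne : ∀ n, quatRGC (n+1) ≠ []
  | 0 => by simp [quatRGC]
  | n+1 => by simp [quatRGC, quat_ne n]

private lemma quat_chain : ∀ n, (quatRGC n).Chain' R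
  | 0 => by simp [quatRGC, List.Chain', List.isChain_nil]
  | 1 => by
      simp only [quatRGC, List.Chain', List.isChain_cons_cons, List.isChain_singleton, and_true]
      exact ⟨R_head (by norm_num), R_head (by norm_num), R_head (by norm_num)⟩
  | n+2 => by
      have ih := quat_chain (n+1)
      have hne := quat_ne n
      set L := quatRGC (n+1) with hL
      obtain ⟨v, hv⟩ : ∃ v, L.head? = some v :=
        Option.isSome_iff_exists.mp (List.isSome_head?.mpr hne)
      obtain ⟨w, hw⟩ : ∃ w, L.getLast? = some w :=
        Option.isSome_iff_exists.mp (List.getLast?_isSome.mpr hne)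
      show (L.map (fun w => 0 :: w) ++ L.reverse.map (fun w => 1 :: w) ++
        L.map (fun w => 2 :: w) ++ L.reverse.map (fun w => 3 :: w)).Chain' R
      unfold List.Chain'
      rw [List.append_assoc, List.append_assoc, List.isChain_append,
        List.isChain_append, List.isChain_append]
      have h0 : (L.map (fun w => 0 :: w)).getLast? = some (0 :: w) := by
        rw [List.getLast?_map, hw]; rfl
      have h1h : (L.reverse.map (fun w => 1 :: w)).head? = some (1 :: w) := by
        rw [List.head?_map, List.head?_reverse, hw]; rfl
      have h1l : (L.reverse.map (fun w => 1 :: w)).getLast? = some (1 :: v) := by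
        rw [List.getLast?_map, List.getLast?_reverse, hv]; rfl
      have h2h : (L.map (fun w => 2 :: w)).head? = some (2 :: v) := by
        rw [List.head?_map, hv]; rfl
      have h2l : (L.map (fun w => 2 :: w)).getLast? = some (2 :: w) := by
        rw [List.getLast?_map, hw]; rfl
      have h3h : (L.reverse.map (fun w => 3 :: w)).head? = some (3 :: w) := by
        rw [List.head?_map, List.head?_reverse, hw]; rfl
      refine ⟨chain_map 0 ih, ⟨chain_map 1 (chain_rev ih),
        ⟨chain_map 2 ih, chain_map 3 (chain_rev ih), ?_⟩, ?_⟩, ?_⟩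
      · intro x hx y hy
        rw [h2l] at hx; rw [h3h] at hy
        cases hx; cases hy
        exact R_head (by norm_num)
      · intro x hx y hy
        rw [h1l] at hx
        rw [List.head?_append, h2h] at hy
        cases hx; cases hy
        exact R_head (by norm_num)
      · intro x hx y hy
        rw [h0] at hx
        rw [List.head?_append, List.head?_append, h1h] at hy
        cases hx; cases hy
        exact R_head (by norm_num)

theorem quatRGC_adjacent_differ_by_one (n : ℕ) (hn : 1 ≤ n) :
    List.Chain'
      (fun u v => u.length = v.length ∧ ∃ i < u.length,
        (∀ j < u.length, j ≠ i → u.getD j 0 = v.getD j 0) ∧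
        ((u.getD i 0 : ℤ) - (v.getD i 0 : ℤ)).natAbs = 1)
      (quatRGC n) := by
  exact quat_chain n
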